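/- Let 0 ≤ k < j ≤ n with k+1 ≤ j, let J(k,j) = {00,...,0k,0j,...,0n,1k,...,1n} ⊂ [n]⋆[n]^op and τ(k,j) = Δ^{J(k,j)}. Define V(k,j+1) as the union of the subcomplex U(k+1) = Ω^n ∪ ⋃_{k+1 ≤ i ≤ n} τ(i,i+1) with ⋃_{j+1 ≤ j' ≤ n+1} τ(k,j'). Then the intersection of τ(k,j) with V(k,j+1) equals the generalized horn Λ^{J(k,j)}_{M(k,j)}, where M(k,j) = {00,...,0k,1(k+1),...,1n} if j = n, and M(k,j) = {00,...,0k,1(k+1),...,1n,0(j+1),...,0n} if k+1 ≤ j < n. -/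
import Mathlib


/-- Vertices of `Δ^{[n]⋆[n]^op}` are identified with `Fin (2n+2)` via `0i ↦ i`,
`1i ↦ 2n+1-i`.  `tauV n k l` is the vertex set of
`τ(k,l) = Δ^{{00,…,0k,0l,…,0n,1k,…,1n}}` (for `l = n+1` this is `σ(k)`). -/
def tauV (n k l : ℕ) : Finset (Fin (2 * n + 2)) :=
  Finset.univ.filter fun v =>
    (v : ℕ) ≤ k ∨ (l ≤ (v : ℕ) ∧ (v : ℕ) ≤ n) ∨
      (n + 1 ≤ (v : ℕ) ∧ (v : ℕ) ≤ 2 * n + 1 - k)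

/-- The vertex set of the face `σ(r) = τ(r, n+1)`. -/
def sigmaV (n r : ℕ) : Finset (Fin (2 * n + 2)) := tauV n r (n + 1)

/-- The vertex set `M(k,j)`: `{00,…,0k,1(k+1),…,1n}` if `j = n`, and additionally
`{0(j+1),…,0n}` if `k+1 ≤ j < n`. -/
def MV (n k j : ℕ) : Finset (Fin (2 * n + 2)) :=
  Finset.univ.filter fun v =>
    (v : ℕ) ≤ k ∨ (j + 1 ≤ (v : ℕ) ∧ (v : ℕ) ≤ n) ∨
      (n + 1 ≤ (v : ℕ) ∧ (v : ℕ) ≤ 2 * n - k)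

/-- Membership in the subcomplex `U(k+1) = Ω^n ∪ ⋃_{k+1 ≤ i ≤ n} τ(i,i+1)`. -/
def memU (n k1 : ℕ) (S : Finset (Fin (2 * n + 2))) : Prop :=
  (∃ r ≤ n, S ⊆ sigmaV n r) ∨ ∃ i, k1 ≤ i ∧ i ≤ n ∧ S ⊆ tauV n i (i + 1)

/-- Membership in the subcomplex `V(k,j1) = U(k+1) ∪ ⋃_{j1 ≤ j' ≤ n+1} τ(k,j')`. -/
def memV (n k j1 : ℕ) (S : Finset (Fin (2 * n + 2))) : Prop :=
  memU n (k + 1) S ∨ ∃ j', j1 ≤ j' ∧ j' ≤ n + 1 ∧ S ⊆ tauV n k j'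

/-- A nonempty subset `S` spans a simplex of `Λ^I_J` iff `S ⊆ I` and `S` omits some
`m ∈ I - J`. -/
def hornMem {α : Type*} [DecidableEq α] (I J S : Finset α) : Prop :=
  S ⊆ I ∧ ∃ m ∈ I \ J, m ∉ S


lemma mem_tauV {n k l : ℕ} {v : Fin (2 * n + 2)} :
    v ∈ tauV n k l ↔ ((v : ℕ) ≤ k ∨ (l ≤ (v : ℕ) ∧ (v : ℕ) ≤ n) ∨
      (n + 1 ≤ (v : ℕ) ∧ (v : ℕ) ≤ 2 * n + 1 - k)) := by
  simp [tauV]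

lemma mem_MV {n k j : ℕ} {v : Fin (2 * n + 2)} :
    v ∈ MV n k j ↔ ((v : ℕ) ≤ k ∨ (j + 1 ≤ (v : ℕ) ∧ (v : ℕ) ≤ n) ∨
      (n + 1 ≤ (v : ℕ) ∧ (v : ℕ) ≤ 2 * n - k)) := by
  simp [MV]

/-- For `0 ≤ k < j ≤ n`, the intersection of `τ(k,j)` with `V(k,j+1)` equals the
generalized horn `Λ^{J(k,j)}_{M(k,j)}`, as subcomplexes of `Δ^{[n]⋆[n]^op}` (stated as an
equality of the families of vertex sets of simplices). -/
theorem tau_inter_V (n k j : ℕ) (hk : k < j) (hj : j ≤ n)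
    (S : Finset (Fin (2 * n + 2))) (hS : S.Nonempty) :
    (S ⊆ tauV n k j ∧ memV n k (j + 1) S) ↔ hornMem (tauV n k j) (MV n k j) S := by
  have hkn : k < n := lt_of_lt_of_le hk hj
  set vj : Fin (2 * n + 2) := ⟨j, by omega⟩ with hvj
  set vk : Fin (2 * n + 2) := ⟨2 * n + 1 - k, by omega⟩ with hvk
  have hvjmem : vj ∈ tauV n k j \ MV n k j := by
    rw [Finset.mem_sdiff, mem_tauV, mem_MV]
    simp only [hvj]
    omega
  have hvkmem : vk ∈ tauV n k j \ MV n k j := by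
    rw [Finset.mem_sdiff, mem_tauV, mem_MV]
    simp only [hvk]
    omega
  constructor
  · rintro ⟨hSJ, hV⟩
    refine ⟨hSJ, ?_⟩
    rcases hV with (⟨r, hr, hsub⟩ | ⟨i, hi1, hi2, hsub⟩) | ⟨j', hj'1, hj'2, hsub⟩
    · by_cases hjS : vj ∈ S
      · refine ⟨vk, hvkmem, fun hkS => ?_⟩
        have h1 := hsub hjS
        have h2 := hsub hkS
        rw [sigmaV, mem_tauV] at h1 h2
        simp only [hvj] at h1
        simp only [hvk] at h2
        omega
      · exact ⟨vj, hvjmem, hjS⟩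
    · refine ⟨vk, hvkmem, fun hkS => ?_⟩
      have h2 := hsub hkS
      rw [mem_tauV] at h2
      simp only [hvk] at h2
      omega
    · refine ⟨vj, hvjmem, fun hjS => ?_⟩
      have h1 := hsub hjS
      rw [mem_tauV] at h1
      simp only [hvj] at h1
      omega
  · rintro ⟨hSJ, m, hm, hmS⟩
    refine ⟨hSJ, ?_⟩
    rw [Finset.mem_sdiff, mem_tauV, mem_MV] at hm
    have hmcases : (m : ℕ) = j ∨ (m : ℕ) = 2 * n + 1 - k := by omega
    rcases hmcases with hmj | hmk
    · right
      refine ⟨j + 1, le_rfl, by omega, fun v hv => ?_⟩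
      have h1 := hSJ hv
      rw [mem_tauV] at h1 ⊢
      have hne : (v : ℕ) ≠ j := by
        intro h
        exact hmS (by rwa [show m = v from Fin.ext (by omega)])
      omega
    · left
      right
      refine ⟨k + 1, le_rfl, by omega, fun v hv => ?_⟩
      have h1 := hSJ hv
      rw [mem_tauV] at h1 ⊢
      have hne : (v : ℕ) ≠ 2 * n + 1 - k := by
        intro h
        exact hmS (by rwa [show m = v from Fin.ext (by omega)])
      omega
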